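/- arXiv:2204.08635 — 2 statements merged into one kernel-verified Lean document; each statement's English description precedes it below -/
import Mathlib

section
/- Let n ≥ 1, α ∈ ℝ, t ∈ (0,∞), p ∈ (1,∞), r ∈ (1,∞), q ∈ [1,∞), and let p', q', r' be conjugate exponents (1/p+1/p' = 1/q+1/q' = 1/r+1/r' = 1). Then for all measurable functions T, f : ℝⁿ → ℂ, ∫_{ℝⁿ} |T(x) f(x)| dx ≤ ‖T‖_{(KE^{-α,p'}_{q',r'})_t} · ‖f‖_{(KE^{α,p}_{q,r})_t}; in particular every T ∈ (KE^{-α,p'}_{q',r'})_t(ℝⁿ) induces a bounded linear functional f ↦ ∫_{ℝⁿ} T f on (KE^{α,p}_{q,r})_t(ℝⁿ). -/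
open MeasureTheory Metric Set ENNReal
open scoped NNReal

noncomputable section

abbrev En (n : ℕ) : Type := EuclideanSpace ℝ (Fin n)

/-- Slice norm `‖f‖_{(E_r^q)_t}` for `ℝ≥0∞`-valued functions. -/
def sliceNorm (n : ℕ) (t r : ℝ) (q : ℝ≥0∞) (g : En n → ℝ≥0∞) : ℝ≥0∞ :=
  if q = ∞ then
    essSup (fun x => ((volume (ball x t))⁻¹ * ∫⁻ y in ball x t, g y ^ r) ^ (1 / r)) volume
  else
    (∫⁻ x, (((volume (ball x t))⁻¹ * ∫⁻ y in ball x t, g y ^ r) ^ (1 / r)) ^ q.toReal) ^ (1 / q.toReal)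

/-- Slice norm of a complex-valued function. -/
def sliceNormC (n : ℕ) (t r : ℝ) (q : ℝ≥0∞) (f : En n → ℂ) : ℝ≥0∞ :=
  sliceNorm n t r q fun y => (‖f y‖₊ : ℝ≥0∞)

/-- The ball `B_k = {x : |x| ≤ 2^k}`. -/
def ballZ (n : ℕ) (k : ℤ) : Set (En n) := closedBall 0 ((2 : ℝ) ^ k)

/-- The shell `S_k = B_k \ B_{k-1}`. -/
def shell (n : ℕ) (k : ℤ) : Set (En n) := ballZ n k \ ballZ n (k - 1)

/-- Homogeneous Herz-slice norm of an `ℝ≥0∞`-valued function. -/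
def herzHom (n : ℕ) (t r : ℝ) (q : ℝ≥0∞) (α : ℝ) (p : ℝ≥0∞) (g : En n → ℝ≥0∞) : ℝ≥0∞ :=
  if p = ∞ then
    ⨆ k : ℤ, (2 : ℝ≥0∞) ^ ((k : ℝ) * α) * sliceNorm n t r q ((shell n k).indicator g)
  else
    (∑' k : ℤ, ((2 : ℝ≥0∞) ^ ((k : ℝ) * α) * sliceNorm n t r q ((shell n k).indicator g)) ^ p.toReal) ^ (1 / p.toReal)

/-- Homogeneous Herz-slice norm of a complex-valued function. -/
def herzHomC (n : ℕ) (t r : ℝ) (q : ℝ≥0∞) (α : ℝ) (p : ℝ≥0∞) (f : En n → ℂ) : ℝ≥0∞ :=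
  herzHom n t r q α p fun y => (‖f y‖₊ : ℝ≥0∞)

/-- The `k`-th piece in the non-homogeneous decomposition: `B_0` for `k = 0`, `S_k` for `k ≥ 1`. -/
def pieceN (n : ℕ) (k : ℕ) : Set (En n) := if k = 0 then ballZ n 0 else shell n k

/-- Non-homogeneous Herz-slice norm of an `ℝ≥0∞`-valued function. -/
def herzNonHom (n : ℕ) (t r : ℝ) (q : ℝ≥0∞) (α : ℝ) (p : ℝ≥0∞) (g : En n → ℝ≥0∞) : ℝ≥0∞ :=
  if p = ∞ then
    ⨆ k : ℕ, (2 : ℝ≥0∞) ^ ((k : ℝ) * α) * sliceNorm n t r q ((pieceN n k).indicator g)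
  else
    (∑' k : ℕ, ((2 : ℝ≥0∞) ^ ((k : ℝ) * α) * sliceNorm n t r q ((pieceN n k).indicator g)) ^ p.toReal) ^ (1 / p.toReal)

/-- Non-homogeneous Herz-slice norm of a complex-valued function. -/
def herzNonHomC (n : ℕ) (t r : ℝ) (q : ℝ≥0∞) (α : ℝ) (p : ℝ≥0∞) (f : En n → ℂ) : ℝ≥0∞ :=
  herzNonHom n t r q α p fun y => (‖f y‖₊ : ℝ≥0∞)

/-- Hardy–Littlewood maximal operator. -/
def maximal (n : ℕ) (f : En n → ℂ) (x : En n) : ℝ≥0∞ :=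
  ⨆ (ρ : ℝ) (_ : 0 < ρ), (volume (ball x ρ))⁻¹ * ∫⁻ y in ball x ρ, (‖f y‖₊ : ℝ≥0∞)

-- auxiliary lemmas
lemma measurable_ballInt {n : ℕ} {t : ℝ} {g : En n → ℝ≥0∞} (hg : Measurable g) :
    Measurable fun x : En n => ∫⁻ y in ball x t, g y := by
  have hs : MeasurableSet {p : En n × En n | dist p.2 p.1 < t} :=
    (isOpen_lt (continuous_dist.comp (continuous_snd.prodMk continuous_fst))
      continuous_const).measurableSet
  have hF : Measurable fun p : En n × En n =>
      ({p : En n × En n | dist p.2 p.1 < t}.indicator (fun p => g p.2)) p :=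
    (hg.comp measurable_snd).indicator hs
  have h2 := Measurable.lintegral_prod_right' (ν := volume) hF
  have heq : (fun x : En n => ∫⁻ y in ball x t, g y)
      = fun x => ∫⁻ y, ({p : En n × En n | dist p.2 p.1 < t}.indicator (fun p => g p.2)) (x, y) := by
    funext x
    rw [← lintegral_indicator measurableSet_ball]
    apply lintegral_congr
    intro y
    by_cases hd : dist y x < t <;> simp [Set.indicator_apply, mem_ball, hd]
  rw [heq]
  exact h2

lemma avg_lintegral {n : ℕ} {t : ℝ} (ht : 0 < t) {g : En n → ℝ≥0∞} (hg : Measurable g) :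
    ∫⁻ x, (volume (ball (0 : En n) t))⁻¹ * ∫⁻ y in ball x t, g y = ∫⁻ y, g y := by
  set v := volume (ball (0 : En n) t) with hv
  have hv0 : v ≠ 0 := (measure_ball_pos volume _ ht).ne'
  have hvt : v ≠ ∞ := measure_ball_lt_top.ne
  rw [lintegral_const_mul' _ _ (ENNReal.inv_ne_top.2 hv0)]
  have hs : MeasurableSet {p : En n × En n | dist p.2 p.1 < t} :=
    (isOpen_lt (continuous_dist.comp (continuous_snd.prodMk continuous_fst))
      continuous_const).measurableSet
  have hF : Measurable (Function.uncurry fun x y : En n => (ball x t).indicator g y) := by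
    have : (Function.uncurry fun x y : En n => (ball x t).indicator g y)
        = fun p : En n × En n => ({p : En n × En n | dist p.2 p.1 < t}.indicator (fun p => g p.2)) p := by
      funext p
      by_cases hd : dist p.2 p.1 < t <;>
        simp [Function.uncurry, Set.indicator_apply, mem_ball, hd]
    rw [this]
    exact (hg.comp measurable_snd).indicator hs
  have h1 : (∫⁻ x, ∫⁻ y in ball x t, g y) = ∫⁻ x, ∫⁻ y, (ball x t).indicator g y := by
    simp_rw [lintegral_indicator measurableSet_ball]
  rw [h1, lintegral_lintegral_swap hF.aemeasurable]
  have h2 : ∀ y : En n, (∫⁻ x, (ball x t).indicator g y) = g y * v := by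
    intro y
    have : (fun x : En n => (ball x t).indicator g y) = (ball y t).indicator (fun _ => g y) := by
      funext x
      by_cases hd : dist y x < t
      · rw [Set.indicator_of_mem (mem_ball.2 hd),
          Set.indicator_of_mem (mem_ball.2 (by rwa [dist_comm]))]
      · rw [Set.indicator_of_notMem (fun h => hd (mem_ball.1 h)),
          Set.indicator_of_notMem (fun h => hd (by rw [dist_comm]; exact mem_ball.1 h))]
    rw [this, lintegral_indicator_const measurableSet_ball, hv,
      Measure.addHaar_ball_center volume y t]
  simp_rw [h2]
  rw [lintegral_mul_const' v _ hvt,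
    show v⁻¹ * ((∫⁻ a : En n, g a) * v) = (v⁻¹ * v) * ∫⁻ a : En n, g a by ring,
    ENNReal.inv_mul_cancel hv0 hvt, one_mul]

lemma slice_holder {n : ℕ} {t r r' : ℝ} (ht : 0 < t) (hr : 1 < r) (hrr' : 1 / r + 1 / r' = 1)
    {q q' : ℝ≥0∞} (hq : 1 ≤ q) (hqt : q ≠ ∞) (hqq' : 1 / q + 1 / q' = 1)
    {g h : En n → ℝ≥0∞} (hg : Measurable g) (hh : Measurable h) :
    ∫⁻ y, g y * h y ≤ sliceNorm n t r' q' g * sliceNorm n t r q h := by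
  set v := volume (ball (0 : En n) t) with hv
  have hv0 : v ≠ 0 := (measure_ball_pos volume _ ht).ne'
  have hvt : v ≠ ∞ := measure_ball_lt_top.ne
  have hball : ∀ x : En n, volume (ball x t) = v := fun x =>
    Measure.addHaar_ball_center volume x t
  have hrc : r.HolderConjugate r' := Real.holderConjugate_iff.2 ⟨hr, by simpa [one_div] using hrr'⟩
  set F : En n → ℝ≥0∞ := fun x => (v⁻¹ * ∫⁻ y in ball x t, g y ^ r') ^ (1 / r') with hF
  set H : En n → ℝ≥0∞ := fun x => (v⁻¹ * ∫⁻ y in ball x t, h y ^ r) ^ (1 / r) with hH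
  have hFm : Measurable F :=
    (measurable_const.mul (measurable_ballInt (hg.pow_const r'))).pow_const _
  have hHm : Measurable H :=
    (measurable_const.mul (measurable_ballInt (hh.pow_const r))).pow_const _
  have hsum : 1 / r' + 1 / r = 1 := by linarith
  have hsplit : v⁻¹ = v⁻¹ ^ (1 / r') * v⁻¹ ^ (1 / r) := by
    rw [← ENNReal.rpow_add _ _ (ENNReal.inv_ne_zero.2 hvt) (ENNReal.inv_ne_top.2 hv0), hsum,
      ENNReal.rpow_one]
  have e1 : ∫⁻ y, g y * h y = ∫⁻ x, v⁻¹ * ∫⁻ y in ball x t, g y * h y :=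
    (avg_lintegral ht (hg.mul hh)).symm
  have e2 : ∀ x : En n, v⁻¹ * (∫⁻ y in ball x t, g y * h y) ≤ F x * H x := by
    intro x
    have hold := ENNReal.lintegral_mul_le_Lp_mul_Lq (volume.restrict (ball x t)) hrc.symm
      hg.aemeasurable hh.aemeasurable
    calc v⁻¹ * ∫⁻ y in ball x t, g y * h y
        ≤ v⁻¹ * ((∫⁻ y in ball x t, g y ^ r') ^ (1 / r')
            * (∫⁻ y in ball x t, h y ^ r) ^ (1 / r)) :=
          mul_le_mul_right (by simpa using hold) _
      _ = F x * H x := by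
          simp only [hF, hH]
          have hrpos : (0:ℝ) < 1 / r := by positivity
          have hr1 : 1 / r < 1 := by
            rw [div_lt_one (by linarith)]; linarith
          have hr'pos : (0:ℝ) < 1 / r' := by linarith
          rw [ENNReal.mul_rpow_of_nonneg _ _ hr'pos.le,
            ENNReal.mul_rpow_of_nonneg _ _ hrpos.le]
          conv_lhs => rw [hsplit]
          ring
  have e3 : ∫⁻ x, F x * H x ≤ sliceNorm n t r' q' g * sliceNorm n t r q h := by
    have hsg : sliceNorm n t r' q' g
        = (if q' = ∞ then essSup F volume
          else (∫⁻ x, F x ^ q'.toReal) ^ (1 / q'.toReal)) := by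
      unfold sliceNorm
      simp_rw [hball]
      rfl
    have hsh : sliceNorm n t r q h = (∫⁻ x, H x ^ q.toReal) ^ (1 / q.toReal) := by
      unfold sliceNorm
      rw [if_neg hqt]
      simp_rw [hball]
      rfl
    rcases eq_or_lt_of_le hq with hq1 | hq1
    · -- q = 1, q' = ∞
      have hq'top : q' = ∞ := by
        rw [← hq1, one_div, one_div, inv_one] at hqq'
        have h0 : q'⁻¹ = 0 :=
          (ENNReal.add_right_inj ENNReal.one_ne_top).mp (by simpa using hqq')
        simpa [ENNReal.inv_eq_zero] using h0
      rw [hsg, if_pos hq'top, hsh, ← hq1]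
      simp only [ENNReal.toReal_one, ENNReal.rpow_one, ne_eq, one_div, inv_one]
      calc ∫⁻ x, F x * H x ≤ ∫⁻ x, essSup F volume * H x :=
            lintegral_mono_ae ((ENNReal.ae_le_essSup F).mono fun x hx =>
              mul_le_mul_left hx _)
        _ = essSup F volume * ∫⁻ x, H x := lintegral_const_mul _ hHm
    · -- 1 < q
      have hq0 : q ≠ 0 := (zero_lt_one.trans hq1).ne'
      have hq'0 : q' ≠ 0 := by
        rintro rfl
        simp [one_div] at hqq'
      have hq'top : q' ≠ ∞ := by
        rintro rfl
        simp only [one_div, ENNReal.inv_top, add_zero] at hqq'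
        exact hq1.ne' (ENNReal.inv_eq_one.mp hqq')
      have hsum2 : 1 / q.toReal + 1 / q'.toReal = 1 := by
        have h := congrArg ENNReal.toReal hqq'
        rw [one_div, one_div, ENNReal.toReal_add (by simp [hq0]) (by simp [hq'0])] at h
        simpa [one_div, ENNReal.toReal_inv] using h
      have h1q : 1 < q.toReal := by
        have := ENNReal.toReal_strict_mono hqt hq1
        simpa using this
      have hcq : (q.toReal).HolderConjugate (q'.toReal) := Real.holderConjugate_iff.2 ⟨h1q, by simpa [one_div] using hsum2⟩
      rw [hsg, if_neg hq'top, hsh]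
      have := ENNReal.lintegral_mul_le_Lp_mul_Lq volume hcq.symm hFm.aemeasurable
        hHm.aemeasurable
      simpa using this
  calc ∫⁻ y, g y * h y = ∫⁻ x, v⁻¹ * ∫⁻ y in ball x t, g y * h y := e1
    _ ≤ ∫⁻ x, F x * H x := lintegral_mono e2
    _ ≤ _ := e3

lemma measurableSet_pieceN (n k : ℕ) : MeasurableSet (pieceN n k) := by
  unfold pieceN shell ballZ
  split
  · exact measurableSet_closedBall
  · exact measurableSet_closedBall.diff measurableSet_closedBall

lemma pieceN_disjoint (n : ℕ) : Pairwise (Function.onFun Disjoint (pieceN n)) := by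
  have key : ∀ j k : ℕ, j < k → Disjoint (pieceN n j) (pieceN n k) := by
    intro j k hjk
    rw [Set.disjoint_left]
    intro x hxj hxk
    have hk0 : k ≠ 0 := by omega
    rw [pieceN, if_neg hk0] at hxk
    have hnot : ¬‖x‖ ≤ (2 : ℝ) ^ ((k : ℤ) - 1) := by
      have := hxk.2
      simpa [ballZ, mem_closedBall_zero_iff] using this
    apply hnot
    have hxj' : ‖x‖ ≤ (2 : ℝ) ^ (j : ℤ) := by
      rcases Nat.eq_zero_or_pos j with rfl | hj
      · simpa [pieceN, ballZ, mem_closedBall_zero_iff] using hxj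
      · rw [pieceN, if_neg hj.ne'] at hxj
        simpa [ballZ, mem_closedBall_zero_iff] using hxj.1
    refine hxj'.trans ?_
    apply zpow_le_zpow_right₀ one_le_two
    omega
  intro j k hjk
  rcases lt_or_gt_of_ne hjk with hlt | hlt
  · exact key _ _ hlt
  · exact (key _ _ hlt).symm

lemma pieceN_iUnion (n : ℕ) : (⋃ k, pieceN n k) = (univ : Set (En n)) := by
  ext x
  simp only [mem_iUnion, mem_univ, iff_true]
  by_cases hx : ‖x‖ ≤ 1
  · exact ⟨0, by simpa [pieceN, ballZ, mem_closedBall_zero_iff] using hx⟩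
  · push_neg at hx
    have hex : ∃ k : ℕ, ‖x‖ ≤ (2 : ℝ) ^ k := by
      obtain ⟨N, hN⟩ := pow_unbounded_of_one_lt ‖x‖ (one_lt_two : (1 : ℝ) < 2)
      exact ⟨N, hN.le⟩
    classical
    refine ⟨Nat.find hex, ?_⟩
    set k := Nat.find hex with hk
    have hks : ‖x‖ ≤ (2 : ℝ) ^ k := Nat.find_spec hex
    have hk1 : k ≠ 0 := by
      intro h0
      rw [h0] at hks
      simp at hks
      linarith
    rw [pieceN, if_neg hk1]
    constructor
    · simpa [ballZ, mem_closedBall_zero_iff, zpow_natCast] using hks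
    · intro hmem
      have h2 : ‖x‖ ≤ (2 : ℝ) ^ ((k : ℤ) - 1) := by
        simpa [ballZ, mem_closedBall_zero_iff] using hmem
      have hcast : ((k - 1 : ℕ) : ℤ) = (k : ℤ) - 1 := by omega
      rw [← hcast, zpow_natCast] at h2
      exact Nat.find_min hex (by omega) h2

lemma lintegral_eq_sum_pieces {n : ℕ} (G : En n → ℝ≥0∞) :
    ∫⁻ x, G x = ∑' k : ℕ, ∫⁻ x, (pieceN n k).indicator G x := by
  simp_rw [lintegral_indicator (measurableSet_pieceN _ _)]
  rw [← lintegral_iUnion (fun k => measurableSet_pieceN n k) (pieceN_disjoint n),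
    pieceN_iUnion, Measure.restrict_univ]

lemma tsum_holder {a b : ℕ → ℝ≥0∞} {s s' : ℝ} (hc : s.HolderConjugate s') :
    ∑' k, a k * b k ≤ (∑' k, a k ^ s) ^ (1 / s) * (∑' k, b k ^ s') ^ (1 / s') := by
  have := ENNReal.lintegral_mul_le_Lp_mul_Lq (Measure.count : Measure ℕ) hc
    (measurable_of_countable a).aemeasurable (measurable_of_countable b).aemeasurable
  simpa [lintegral_count] using this

/-- Hölder's inequality for non-homogeneous Herz-slice spaces; every element of
the dual-index space induces a bounded linear functional. -/
theorem nonHomHerzSlice_holder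
    (n : ℕ) (hn : 1 ≤ n) (α t r r' : ℝ) (ht : 0 < t) (hr : 1 < r)
    (hrr' : 1 / r + 1 / r' = 1)
    (p p' : ℝ≥0∞) (hp : 1 < p) (hp' : p ≠ ∞) (hpp' : 1 / p + 1 / p' = 1)
    (q q' : ℝ≥0∞) (hq : 1 ≤ q) (hq' : q ≠ ∞) (hqq' : 1 / q + 1 / q' = 1)
    (T f : En n → ℂ) (hT : Measurable T) (hf : Measurable f) :
    ∫⁻ x, (‖T x‖₊ : ℝ≥0∞) * (‖f x‖₊ : ℝ≥0∞)
      ≤ herzNonHomC n t r' q' (-α) p' T * herzNonHomC n t r q α p f := by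
  classical
  set G : En n → ℝ≥0∞ := fun y => (‖T y‖₊ : ℝ≥0∞) with hG
  set Hf : En n → ℝ≥0∞ := fun y => (‖f y‖₊ : ℝ≥0∞) with hHf
  have hGm : Measurable G := hT.nnnorm.coe_nnreal_ennreal
  have hHfm : Measurable Hf := hf.nnnorm.coe_nnreal_ennreal
  -- conjugate exponents for p
  have hp0 : p ≠ 0 := (zero_lt_one.trans hp).ne'
  have hp'0 : p' ≠ 0 := by
    rintro rfl
    simp [one_div] at hpp'
  have hp'top : p' ≠ ∞ := by
    rintro rfl
    simp only [one_div, ENNReal.inv_top, add_zero] at hpp'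
    exact hp.ne' (ENNReal.inv_eq_one.mp hpp')
  have hsump : 1 / p.toReal + 1 / p'.toReal = 1 := by
    have hh := congrArg ENNReal.toReal hpp'
    rw [one_div, one_div, ENNReal.toReal_add (by simp [hp0]) (by simp [hp'0])] at hh
    simpa [one_div, ENNReal.toReal_inv] using hh
  have h1p : 1 < p.toReal := by
    have := ENNReal.toReal_strict_mono hp' hp
    simpa using this
  have hcp : (p.toReal).HolderConjugate (p'.toReal) := Real.holderConjugate_iff.2 ⟨h1p, by simpa [one_div] using hsump⟩
  have h2t : (2 : ℝ≥0∞) ≠ ∞ := by norm_num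
  have h20 : (2 : ℝ≥0∞) ≠ 0 := by norm_num
  calc ∫⁻ x, G x * Hf x
      = ∑' k : ℕ, ∫⁻ x, (pieceN n k).indicator (fun y => G y * Hf y) x :=
        lintegral_eq_sum_pieces _
    _ = ∑' k : ℕ, ∫⁻ x, ((pieceN n k).indicator G x) * ((pieceN n k).indicator Hf x) := by
        refine tsum_congr fun k => lintegral_congr fun x => ?_
        by_cases hx : x ∈ pieceN n k <;> simp [Set.indicator_apply, hx]
    _ ≤ ∑' k : ℕ, sliceNorm n t r' q' ((pieceN n k).indicator G)
          * sliceNorm n t r q ((pieceN n k).indicator Hf) :=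
        ENNReal.tsum_le_tsum fun k =>
          slice_holder ht hr hrr' hq hq' hqq'
            (hGm.indicator (measurableSet_pieceN n k))
            (hHfm.indicator (measurableSet_pieceN n k))
    _ = ∑' k : ℕ, ((2 : ℝ≥0∞) ^ ((k : ℝ) * (-α)) * sliceNorm n t r' q' ((pieceN n k).indicator G))
          * ((2 : ℝ≥0∞) ^ ((k : ℝ) * α) * sliceNorm n t r q ((pieceN n k).indicator Hf)) := by
        refine tsum_congr fun k => ?_
        rw [mul_mul_mul_comm, ← ENNReal.rpow_add _ _ h20 h2t,
          show (k : ℝ) * (-α) + (k : ℝ) * α = 0 by ring, ENNReal.rpow_zero, one_mul]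
    _ ≤ (∑' k : ℕ, ((2 : ℝ≥0∞) ^ ((k : ℝ) * (-α))
            * sliceNorm n t r' q' ((pieceN n k).indicator G)) ^ p'.toReal) ^ (1 / p'.toReal)
        * (∑' k : ℕ, ((2 : ℝ≥0∞) ^ ((k : ℝ) * α)
            * sliceNorm n t r q ((pieceN n k).indicator Hf)) ^ p.toReal) ^ (1 / p.toReal) :=
        tsum_holder hcp.symm
    _ = herzNonHomC n t r' q' (-α) p' T * herzNonHomC n t r q α p f := by
        unfold herzNonHomC herzNonHom
        rw [if_neg hp'top, if_neg hp']
end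
end

section
/- Let n ≥ 1, t ∈ (0,∞), r ∈ (1,∞) and q ∈ (1,∞). Then there is a constant C > 0, depending only on n, t, r, q, such that for every center x₀ ∈ ℝⁿ and every radius r₀ ∈ (1,∞), the characteristic function of the ball B(x₀, r₀) satisfies ‖1_{B(x₀,r₀)}‖_{(E_r^q)_t} ≤ C · r₀^{n/q}. (In particular, the slice norm of 1_{B(x₀,r₀)} does not depend on x₀: ‖1_{B(x₀,r₀)}‖_{(E_r^q)_t} = ‖1_{B(0,r₀)}‖_{(E_r^q)_t}.) -/
open MeasureTheory Metric Set ENNReal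
open scoped NNReal

noncomputable section

/-- Auxiliary: the inner integral of the (rpow of the) indicator of a ball is the measure
of the intersection of the two balls. -/
lemma inner_int_indicator (n : ℕ) {r : ℝ} (hr0 : 0 < r) (c : En n) (R t : ℝ) (x : En n) :
    ∫⁻ y in ball x t, ((ball c R).indicator (fun _ => (1 : ℝ≥0∞)) y) ^ r
      = volume (ball c R ∩ ball x t) := by
  have h : ∀ y : En n, ((ball c R).indicator (fun _ => (1 : ℝ≥0∞)) y) ^ r
      = (ball c R).indicator (fun _ => (1 : ℝ≥0∞)) y := by
    intro y
    by_cases hy : y ∈ ball c R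
    · simp [Set.indicator_of_mem hy]
    · simp [Set.indicator_of_notMem hy, ENNReal.zero_rpow_of_pos hr0]
  simp_rw [h]
  rw [show ((ball c R).indicator (fun _ => (1 : ℝ≥0∞))) = (ball c R).indicator 1 from rfl,
    lintegral_indicator_one measurableSet_ball, Measure.restrict_apply measurableSet_ball]

/-- slice norm of the characteristic function of a ball `B(x₀, r₀)` with
`r₀ > 1`: it is independent of the center and bounded by a constant times `r₀^{n/q}`. -/
theorem slice_norm_indicator_ball
    (n : ℕ) (hn : 1 ≤ n) (t r : ℝ) (ht : 0 < t) (hr : 1 < r)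
    (q : ℝ≥0∞) (hq : 1 < q) (hq' : q ≠ ∞) :
    (∃ C : ℝ≥0, 0 < C ∧ ∀ (x₀ : En n) (r₀ : ℝ), 1 < r₀ →
      sliceNorm n t r q ((ball x₀ r₀).indicator fun _ => (1 : ℝ≥0∞))
        ≤ (C : ℝ≥0∞) * ENNReal.ofReal (r₀ ^ ((n : ℝ) / q.toReal))) ∧
    (∀ (x₀ : En n) (r₀ : ℝ), 1 < r₀ →
      sliceNorm n t r q ((ball x₀ r₀).indicator fun _ => (1 : ℝ≥0∞))
        = sliceNorm n t r q ((ball (0 : En n) r₀).indicator fun _ => (1 : ℝ≥0∞))) := by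
  have hr0 : (0 : ℝ) < r := zero_lt_one.trans hr
  have hq0 : 0 < q.toReal := ENNReal.toReal_pos (zero_lt_one.trans hq).ne' hq'
  set V : ℝ≥0∞ := volume (ball (0 : En n) 1) with hV
  have hV0 : V ≠ 0 := (measure_ball_pos volume (0 : En n) one_pos).ne'
  have hVtop : V ≠ ∞ := measure_ball_lt_top.ne
  constructor
  · -- the bound
    set A : ℝ≥0∞ := (ENNReal.ofReal ((1 + t) ^ n) * V) ^ (1 / q.toReal) with hA
    have hApos : 0 < A := by
      apply ENNReal.rpow_pos
      · exact ENNReal.mul_pos (by positivity) hV0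
      · exact ENNReal.mul_ne_top ENNReal.ofReal_ne_top hVtop
    have hAtop : A ≠ ∞ := by
      apply ENNReal.rpow_ne_top_of_nonneg (by positivity)
      exact ENNReal.mul_ne_top ENNReal.ofReal_ne_top hVtop
    refine ⟨A.toNNReal, ?_, ?_⟩
    · exact ENNReal.toNNReal_pos hApos.ne' hAtop
    intro x₀ r₀ hr₀
    have hr₀0 : (0 : ℝ) < r₀ := zero_lt_one.trans hr₀
    -- pointwise bound by the indicator of `closedBall x₀ (r₀ + t)`
    have hF : ∀ x : En n,
        (((volume (ball x t))⁻¹ *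
            ∫⁻ y in ball x t, ((ball x₀ r₀).indicator (fun _ => (1 : ℝ≥0∞)) y) ^ r) ^ (1 / r))
          ^ q.toReal
          ≤ (closedBall x₀ (r₀ + t)).indicator (fun _ => (1 : ℝ≥0∞)) x := by
      intro x
      rw [inner_int_indicator n hr0]
      by_cases hx : x ∈ closedBall x₀ (r₀ + t)
      · rw [Set.indicator_of_mem hx]
        have h1 : (volume (ball x t))⁻¹ * volume (ball x₀ r₀ ∩ ball x t) ≤ 1 := by
          rw [← ENNReal.inv_mul_cancel (measure_ball_pos volume x ht).ne' measure_ball_lt_top.ne]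
          exact mul_le_mul_right (measure_mono inter_subset_right) _
        calc (((volume (ball x t))⁻¹ * volume (ball x₀ r₀ ∩ ball x t)) ^ (1 / r)) ^ q.toReal
            ≤ (1 : ℝ≥0∞) ^ q.toReal :=
              ENNReal.rpow_le_rpow (ENNReal.rpow_le_one h1 (by positivity)) hq0.le
          _ = 1 := ENNReal.one_rpow _
      · rw [Set.indicator_of_notMem hx]
        have hempty : ball x₀ r₀ ∩ ball x t = ∅ := by
          rw [Set.eq_empty_iff_forall_notMem]
          rintro y ⟨hy1, hy2⟩
          apply hx
          rw [mem_closedBall]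
          calc dist x x₀ ≤ dist x y + dist y x₀ := dist_triangle x y x₀
            _ ≤ t + r₀ := add_le_add (le_of_lt (by rwa [mem_ball, dist_comm] at hy2))
                (le_of_lt (mem_ball.mp hy1))
            _ = r₀ + t := add_comm t r₀
        rw [hempty]
        simp only [measure_empty, mul_zero]
        rw [ENNReal.zero_rpow_of_pos (by positivity : (0 : ℝ) < 1 / r),
          ENNReal.zero_rpow_of_pos hq0]
    have hstep : sliceNorm n t r q ((ball x₀ r₀).indicator fun _ => (1 : ℝ≥0∞))
        ≤ (volume (closedBall x₀ (r₀ + t))) ^ (1 / q.toReal) := by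
      rw [sliceNorm, if_neg hq']
      have : (∫⁻ x, (((volume (Metric.ball x t))⁻¹ *
            ∫⁻ y in Metric.ball x t, ((ball x₀ r₀).indicator (fun _ => (1:ℝ≥0∞)) y) ^ r) ^ (1 / r))
              ^ q.toReal)
          ≤ volume (closedBall x₀ (r₀ + t)) := by
        calc _ ≤ ∫⁻ x, (closedBall x₀ (r₀ + t)).indicator (fun _ => (1 : ℝ≥0∞)) x :=
              lintegral_mono hF
          _ = volume (closedBall x₀ (r₀ + t)) :=
              lintegral_indicator_one measurableSet_closedBall
      exact ENNReal.rpow_le_rpow this (by positivity)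
    have hvol : volume (closedBall x₀ (r₀ + t)) = ENNReal.ofReal ((r₀ + t) ^ n) * V := by
      rw [Measure.addHaar_closedBall _ _ (by positivity), finrank_euclideanSpace_fin]
    have hmono : ENNReal.ofReal ((r₀ + t) ^ n) ≤ ENNReal.ofReal ((1 + t) ^ n) *
        ENNReal.ofReal (r₀ ^ n) := by
      rw [← ENNReal.ofReal_mul (by positivity)]
      apply ENNReal.ofReal_le_ofReal
      have h1 : r₀ + t ≤ (1 + t) * r₀ := by nlinarith
      calc (r₀ + t) ^ n ≤ ((1 + t) * r₀) ^ n := pow_le_pow_left₀ (by positivity) h1 n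
        _ = (1 + t) ^ n * r₀ ^ n := mul_pow _ _ _
    have hfinal : (volume (closedBall x₀ (r₀ + t))) ^ (1 / q.toReal)
        ≤ (A.toNNReal : ℝ≥0∞) * ENNReal.ofReal (r₀ ^ ((n : ℝ) / q.toReal)) := by
      rw [hvol, ENNReal.coe_toNNReal hAtop, hA]
      calc (ENNReal.ofReal ((r₀ + t) ^ n) * V) ^ (1 / q.toReal)
          ≤ (ENNReal.ofReal ((1 + t) ^ n) * V * ENNReal.ofReal (r₀ ^ n)) ^ (1 / q.toReal) := by
            apply ENNReal.rpow_le_rpow _ (by positivity)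
            calc ENNReal.ofReal ((r₀ + t) ^ n) * V
                ≤ ENNReal.ofReal ((1 + t) ^ n) * ENNReal.ofReal (r₀ ^ n) * V :=
                  mul_le_mul_left hmono V
              _ = ENNReal.ofReal ((1 + t) ^ n) * V * ENNReal.ofReal (r₀ ^ n) := by ring
        _ = (ENNReal.ofReal ((1 + t) ^ n) * V) ^ (1 / q.toReal) *
              (ENNReal.ofReal (r₀ ^ n)) ^ (1 / q.toReal) :=
            ENNReal.mul_rpow_of_nonneg _ _ (by positivity)
        _ = (ENNReal.ofReal ((1 + t) ^ n) * V) ^ (1 / q.toReal) *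
              ENNReal.ofReal (r₀ ^ ((n : ℝ) / q.toReal)) := by
            congr 1
            rw [ENNReal.ofReal_rpow_of_pos (by positivity)]
            congr 1
            rw [← Real.rpow_natCast r₀ n, ← Real.rpow_mul hr₀0.le]
            congr 1
            field_simp
    exact hstep.trans hfinal
  · -- translation invariance
    intro x₀ r₀ hr₀
    simp only [sliceNorm, if_neg hq']
    congr 1
    have key : ∀ x : En n,
        (((volume (ball x t))⁻¹ *
            ∫⁻ y in ball x t, ((ball x₀ r₀).indicator (fun _ => (1 : ℝ≥0∞)) y) ^ r) ^ (1 / r))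
          ^ q.toReal
        = (((volume (ball (x - x₀) t))⁻¹ *
            ∫⁻ y in ball (x - x₀) t,
              ((ball (0 : En n) r₀).indicator (fun _ => (1 : ℝ≥0∞)) y) ^ r) ^ (1 / r))
          ^ q.toReal := by
      intro x
      rw [inner_int_indicator n hr0, inner_int_indicator n hr0,
        Measure.addHaar_ball_center volume x, Measure.addHaar_ball_center volume (x - x₀)]
      have hset : (fun z => z + x₀) ⁻¹' (ball x₀ r₀ ∩ ball x t)
          = ball (0 : En n) r₀ ∩ ball (x - x₀) t := by
        ext z
        simp only [Set.mem_preimage, Set.mem_inter_iff, mem_ball, dist_eq_norm]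
        constructor
        · rintro ⟨h1, h2⟩
          constructor
          · simpa using h1
          · convert h2 using 2
            abel
        · rintro ⟨h1, h2⟩
          constructor
          · simpa using h1
          · convert h2 using 2
            abel
      have := measure_preimage_add_right volume x₀ (ball x₀ r₀ ∩ ball x t)
      rw [hset] at this
      rw [← this]
    simp_rw [key]
    exact lintegral_sub_right_eq_self
      (fun x => (((volume (ball x t))⁻¹ *
          ∫⁻ y in ball x t, ((ball (0 : En n) r₀).indicator (fun _ => (1 : ℝ≥0∞)) y) ^ r)
            ^ (1 / r)) ^ q.toReal) x₀
end
end
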